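/- Let μ, s ∈ ℝ, let w : ℝ → ISO⁺(2,1) ⊂ GL₄(ℝ) and Φ, T : ℝ → ℝ be differentiable, and set w̃(ε) = w(ε)·exp( −Φ(ε)Ĵ₀ + T(ε)P̂₀ ). Then for every ε: ⟨ μĴ₀ + sP̂₀, w̃(ε)⁻¹w̃′(ε) ⟩ = ⟨ μĴ₀ + sP̂₀, w(ε)⁻¹w′(ε) ⟩ + μ·T′(ε) − s·Φ′(ε). (Section 5.2: under the gauge transformation w ↦ w·(e^{−ΦJ₀}, TP₀) the centre-of-mass symplectic potential ⟨μJ₀ + sP₀, w⁻¹δw⟩ changes by μδT − sδΦ; together with the compensating change of Θ this exhibits (5.10) as a gauge transformation.) -/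

import Mathlib

open Matrix

noncomputable section

attribute [local instance] Matrix.normedAddCommGroup Matrix.normedSpace

/-- The Minkowski metric matrix diag(1,-1,-1). -/
def η3 : Matrix (Fin 3) (Fin 3) ℝ := Matrix.diagonal ![1, -1, -1]

/-- The Minkowski bilinear form on ℝ³. -/
def mink (x y : Fin 3 → ℝ) : ℝ := x 0 * y 0 - x 1 * y 1 - x 2 * y 2

/-- The Minkowski cross product. -/
def crossM (p q : Fin 3 → ℝ) : Fin 3 → ℝ :=
  ![p 1 * q 2 - p 2 * q 1, p 0 * q 2 - p 2 * q 0, p 1 * q 0 - p 0 * q 1]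

/-- The map M : ℝ³ → so(2,1), M(p)q = p ×_η q. -/
def Mmap (p : Fin 3 → ℝ) : Matrix (Fin 3) (Fin 3) ℝ :=
  !![0, -(p 2), p 1; -(p 2), 0, p 0; p 1, -(p 0), 0]

/-- The inverse m : so(2,1) → ℝ³ of M (extracted entrywise). -/
def mser (X : Matrix (Fin 3) (Fin 3) ℝ) : Fin 3 → ℝ := ![X 1 2, X 0 2, -(X 0 1)]

/-- Membership in SO⁺(2,1). -/
def IsSOplus (v : Matrix (Fin 3) (Fin 3) ℝ) : Prop :=
  vᵀ * η3 * v = η3 ∧ v.det = 1 ∧ 0 < v 0 0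

/-- so(2,1) as a set of 3×3 matrices. -/
def IsSO21 (X : Matrix (Fin 3) (Fin 3) ℝ) : Prop := Xᵀ * η3 + η3 * X = 0

/-- The 4×4 Poincaré matrix [[v,x],[0,1]]. -/
def pmat (v : Matrix (Fin 3) (Fin 3) ℝ) (x : Fin 3 → ℝ) : Matrix (Fin 4) (Fin 4) ℝ :=
  Matrix.of fun i j =>
    if hi : (i : ℕ) < 3 then
      if hj : (j : ℕ) < 3 then v ⟨i, hi⟩ ⟨j, hj⟩ else x ⟨i, hi⟩
    else if (j : ℕ) < 3 then 0 else 1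

/-- The 4×4 iso(2,1) matrix [[X,b],[0,0]]. -/
def amat (X : Matrix (Fin 3) (Fin 3) ℝ) (b : Fin 3 → ℝ) : Matrix (Fin 4) (Fin 4) ℝ :=
  Matrix.of fun i j =>
    if hi : (i : ℕ) < 3 then
      if hj : (j : ℕ) < 3 then X ⟨i, hi⟩ ⟨j, hj⟩ else b ⟨i, hi⟩
    else 0

/-- Membership in the Poincaré group ISO⁺(2,1) ⊂ GL₄(ℝ). -/
def IsISO (g : Matrix (Fin 4) (Fin 4) ℝ) : Prop :=
  ∃ v x, IsSOplus v ∧ g = pmat v x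

/-- Membership in the Lie algebra iso(2,1). -/
def IsISOAlg (ξ : Matrix (Fin 4) (Fin 4) ℝ) : Prop :=
  ∃ X b, IsSO21 X ∧ ξ = amat X b

/-- Standard basis vectors of ℝ³. -/
def e3 (a : Fin 3) : Fin 3 → ℝ := Pi.single a 1

/-- The rotation/boost generators Ĵ_a of iso(2,1). -/
def Jhat (a : Fin 3) : Matrix (Fin 4) (Fin 4) ℝ := amat (Mmap (e3 a)) 0

/-- The translation generators P̂_a of iso(2,1). -/
def Phat (a : Fin 3) : Matrix (Fin 4) (Fin 4) ℝ := amat 0 (e3 a)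

/-- The invariant pairing ⟨[[X,b],0],[[Y,c],0]⟩ = η(m X, c) + η(m Y, b) on iso(2,1). -/
def pairIso (ξ ζ : Matrix (Fin 4) (Fin 4) ℝ) : ℝ :=
  mink ![ξ 1 2, ξ 0 2, -(ξ 0 1)] ![ζ 0 3, ζ 1 3, ζ 2 3]
  + mink ![ζ 1 2, ζ 0 2, -(ζ 0 1)] ![ξ 0 3, ξ 1 3, ξ 2 3]

/-- Ordered product U_k(ε) = u_{k-1}(ε)⋯u_0(ε) (with U_0 = 1). -/
def ordProd {n : ℕ} (u : ℕ → ℝ → Matrix (Fin n) (Fin n) ℝ) : ℕ → ℝ → Matrix (Fin n) (Fin n) ℝ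
  | 0 => fun _ => 1
  | k + 1 => fun ε => u k ε * ordProd u k ε


/-! ### Auxiliary material for statement17 -/

/-- Concrete form of `Jhat 0`. -/
def JJ4 : Matrix (Fin 4) (Fin 4) ℝ := !![0,0,0,0;0,0,1,0;0,-1,0,0;0,0,0,0]

/-- Concrete form of `Phat 0`. -/
def PP4 : Matrix (Fin 4) (Fin 4) ℝ := !![0,0,0,1;0,0,0,0;0,0,0,0;0,0,0,0]

lemma Jhat0_eq : Jhat 0 = JJ4 := by
  ext i j
  fin_cases i <;> fin_cases j <;>
    norm_num [Jhat, amat, Mmap, e3, JJ4, Pi.single, Function.update,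
      Matrix.vecHead, Matrix.vecTail] <;> decide

lemma Phat0_eq : Phat 0 = PP4 := by
  ext i j
  fin_cases i <;> fin_cases j <;>
    norm_num [Phat, amat, PP4, e3, Pi.single, Function.update,
      Matrix.vecHead, Matrix.vecTail] <;> decide

lemma JP4_zero : JJ4 * PP4 = 0 := by
  ext i j; fin_cases i <;> fin_cases j <;>
    simp [JJ4, PP4, Matrix.mul_apply, Fin.sum_univ_four]

lemma PJ4_zero : PP4 * JJ4 = 0 := by
  ext i j; fin_cases i <;> fin_cases j <;>
    simp [JJ4, PP4, Matrix.mul_apply, Fin.sum_univ_four]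

lemma PP4_zero : PP4 * PP4 = 0 := by
  ext i j; fin_cases i <;> fin_cases j <;>
    simp [PP4, Matrix.mul_apply, Fin.sum_univ_four]

lemma pairIso_eval (μ s : ℝ) (ζ : Matrix (Fin 4) (Fin 4) ℝ) :
    pairIso (μ • JJ4 + s • PP4) ζ = μ * ζ 0 3 + s * ζ 1 2 := by
  simp [pairIso, mink, JJ4, PP4, Matrix.vecHead, Matrix.vecTail]
  ring

section linftyAux

attribute [-instance] Matrix.normedAddCommGroup Matrix.normedSpace
attribute [local instance] Matrix.linftyOpNormedRing Matrix.linftyOpNormedAlgebra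

open NormedSpace in
lemma aux_annih_left (X B : Matrix (Fin 4) (Fin 4) ℝ) (h : X * B = 0) :
    NormedSpace.exp X * B = B := by
  have hs : Summable (fun n : ℕ => ((n.factorial : ℝ)⁻¹) • X ^ n) :=
    NormedSpace.expSeries_summable' (𝕂 := ℝ) X
  rw [exp_eq_tsum ℝ, ← hs.tsum_mul_right,
    tsum_eq_single 0]
  · simp
  · intro n hn
    obtain ⟨m, rfl⟩ := Nat.exists_eq_succ_of_ne_zero hn
    rw [smul_mul_assoc, pow_succ, mul_assoc, h, mul_zero, smul_zero]

open NormedSpace in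
lemma aux_annih_right (X B : Matrix (Fin 4) (Fin 4) ℝ) (h : B * X = 0) :
    B * NormedSpace.exp X = B := by
  have hs : Summable (fun n : ℕ => ((n.factorial : ℝ)⁻¹) • X ^ n) :=
    NormedSpace.expSeries_summable' (𝕂 := ℝ) X
  rw [exp_eq_tsum ℝ, ← hs.tsum_mul_left,
    tsum_eq_single 0]
  · simp
  · intro n hn
    obtain ⟨m, rfl⟩ := Nat.exists_eq_succ_of_ne_zero hn
    rw [mul_smul_comm, pow_succ', ← mul_assoc, h, zero_mul, smul_zero]

lemma aux_comm (X B : Matrix (Fin 4) (Fin 4) ℝ) (h : X * B = B * X) :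
    NormedSpace.exp X * B = B * NormedSpace.exp X := by
  have : Commute X B := h
  exact (this.exp_left)

open NormedSpace in
lemma aux_deriv_slope (w : ℝ → Matrix (Fin 4) (Fin 4) ℝ) (D : Matrix (Fin 4) (Fin 4) ℝ)
    (Φ T : ℝ → ℝ) (p q ε : ℝ)
    (hw : Filter.Tendsto (slope w ε) (nhdsWithin ε {ε}ᶜ) (nhds D))
    (hΦ : HasDerivAt Φ p ε) (hT : HasDerivAt T q ε) :
    Filter.Tendsto
      (slope (fun t => w t * exp (-(Φ t) • JJ4 + T t • PP4)) ε) (nhdsWithin ε {ε}ᶜ)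
      (nhds (D * exp (-(Φ ε) • JJ4 + T ε • PP4)
        + w ε * (exp (-(Φ ε) • JJ4 + T ε • PP4) * (-p • JJ4 + q • PP4)))) := by
  have hJP := JP4_zero
  have hPJ := PJ4_zero
  have hPP := PP4_zero
  have hw' : HasDerivAt w D ε := hasDerivAt_iff_tendsto_slope.mpr hw
  have hsplit : ∀ t : ℝ, exp (-(Φ t) • JJ4 + T t • PP4)
      = exp (Φ t • (-JJ4)) * exp (T t • PP4) := by
    intro t
    rw [← Matrix.exp_add_of_commute]
    · congr 1
      rw [smul_neg, neg_smul]
    · show _ = _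
      rw [smul_mul_smul_comm, smul_mul_smul_comm, neg_mul, mul_neg, hJP, hPJ]
      simp
  have hEd : HasDerivAt (fun t => exp (Φ t • (-JJ4)))
      (p • (exp (Φ ε • (-JJ4)) * (-JJ4))) ε :=
    (hasDerivAt_exp_smul_const (-JJ4) (Φ ε)).scomp ε hΦ
  have hFd : HasDerivAt (fun t => exp (T t • PP4))
      (q • (exp (T ε • PP4) * PP4)) ε :=
    (hasDerivAt_exp_smul_const PP4 (T ε)).scomp ε hT
  have htot := hw'.mul (hEd.mul hFd)
  have hfun : (fun t => w t * (exp (Φ t • (-JJ4)) * exp (T t • PP4)))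
      = fun t => w t * exp (-(Φ t) • JJ4 + T t • PP4) := by
    funext t; rw [hsplit t]
  simp only [Pi.mul_def] at htot
  rw [hfun] at htot
  have hFP : exp (T ε • PP4) * PP4 = PP4 :=
    aux_annih_left _ _ (by simp [smul_mul_assoc, hPP])
  have hJF2 : JJ4 * exp (T ε • PP4) = JJ4 :=
    aux_annih_right _ _ (by simp [mul_smul_comm, hJP])
  have hFJ2 : exp (T ε • PP4) * JJ4 = JJ4 :=
    aux_annih_left _ _ (by simp [smul_mul_assoc, hPJ])
  have hderiv : D * (exp (Φ ε • (-JJ4)) * exp (T ε • PP4))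
      + w ε * (p • (exp (Φ ε • (-JJ4)) * (-JJ4)) * exp (T ε • PP4)
        + exp (Φ ε • (-JJ4)) * (q • (exp (T ε • PP4) * PP4)))
      = D * exp (-(Φ ε) • JJ4 + T ε • PP4)
        + w ε * (exp (-(Φ ε) • JJ4 + T ε • PP4) * (-p • JJ4 + q • PP4)) := by
    rw [hsplit ε, hFP]
    congr 1
    congr 1
    simp only [smul_mul_assoc, mul_smul_comm, mul_add, mul_assoc, mul_neg, neg_mul,
      smul_neg, neg_smul, hFP, hJF2, hFJ2]
  rw [hderiv] at htot
  exact hasDerivAt_iff_tendsto_slope.mp htot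

end linftyAux

lemma pmat_mul (a c : Matrix (Fin 3) (Fin 3) ℝ) (b d : Fin 3 → ℝ) :
    pmat a b * pmat c d = pmat (a * c) (a *ᵥ d + b) := by
  ext i j
  fin_cases i <;> fin_cases j <;>
  · simp only [pmat, Matrix.mul_apply, Matrix.of_apply, Fin.sum_univ_four]
    norm_num [Matrix.mul_apply, Matrix.mulVec, dotProduct, Fin.sum_univ_three,
      show ((3:Fin 4):ℕ) = 3 from rfl, show ((2:Fin 4):ℕ) = 2 from rfl,
      show (⟨2, by norm_num⟩ : Fin 3) = 2 from rfl]
    try ring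

lemma pmat_one : pmat 1 0 = 1 := by
  ext i j
  fin_cases i <;> fin_cases j <;>
    norm_num [pmat, Matrix.one_apply, Fin.ext_iff,
      show ((0:Fin 4):ℕ) = 0 from rfl, show ((1:Fin 4):ℕ) = 1 from rfl,
      show ((2:Fin 4):ℕ) = 2 from rfl, show ((3:Fin 4):ℕ) = 3 from rfl]

lemma eta_sq : η3 * η3 = 1 := by
  have h : (fun i => ![(1:ℝ),-1,-1] i * ![1,-1,-1] i) = fun _ => (1:ℝ) := by
    funext k; fin_cases k <;> norm_num
  rw [η3, Matrix.diagonal_mul_diagonal, h, Matrix.diagonal_one]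

/-- Embedding of `Fin 3` into `Fin 4`. -/
def E3 : Fin 3 → Fin 4 := Fin.castLE (by norm_num)

lemma pmat_entry (v : Matrix (Fin 3) (Fin 3) ℝ) (x : Fin 3 → ℝ) (k l : Fin 3) :
    pmat v x (E3 k) (E3 l) = v k l := by
  simp [pmat, E3]

lemma pmat_col3 (v : Matrix (Fin 3) (Fin 3) ℝ) (x : Fin 3 → ℝ) (k : Fin 3) :
    pmat v x (E3 k) 3 = x k := by
  simp [pmat, E3, show ((3:Fin 4):ℕ) = 3 from rfl]

lemma pmat_row3 (v : Matrix (Fin 3) (Fin 3) ℝ) (x : Fin 3 → ℝ) (j : Fin 4) :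
    pmat v x 3 j = if (j : ℕ) < 3 then 0 else 1 := by
  simp [pmat, show ((3:Fin 4):ℕ) = 3 from rfl]

lemma orth_entry (v : Matrix (Fin 3) (Fin 3) ℝ) (hv : vᵀ * η3 * v = η3) (i j : Fin 3) :
    v 0 i * v 0 j - v 1 i * v 1 j - v 2 i * v 2 j = η3 i j := by
  have h := congrFun (congrFun hv i) j
  simp [Matrix.mul_apply, Fin.sum_univ_three, η3, Matrix.diagonal_apply,
    Matrix.transpose_apply, Matrix.vecHead, Matrix.vecTail] at h
  rw [η3, Matrix.diagonal_apply]
  rw [← h]; ring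

lemma u_entry (v : Matrix (Fin 3) (Fin 3) ℝ) (i k : Fin 3) :
    (η3 * vᵀ * η3) i k = η3 i i * v k i * η3 k k := by
  fin_cases i <;> fin_cases k <;>
    norm_num [η3, Matrix.mul_apply, Fin.sum_univ_three, Matrix.diagonal_apply,
      Matrix.transpose_apply, Matrix.vecHead, Matrix.vecTail]

lemma conj_entries (G H Y : Matrix (Fin 4) (Fin 4) ℝ)
    (hGP : G * PP4 = PP4) (hPG : PP4 * G = PP4) (hGJ : G * JJ4 = JJ4 * G)
    (hHP : H * PP4 = PP4) (hPH : PP4 * H = PP4) (hHJ : H * JJ4 = JJ4 * H)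
    (hHG : H * G = 1)
    (hY00 : Y 0 0 = 0) (hY11 : Y 1 1 = 0) (hY22 : Y 2 2 = 0)
    (hY21 : Y 2 1 = -(Y 1 2)) (hY30 : Y 3 0 = 0) (hY33 : Y 3 3 = 0) :
    (H * Y * G) 0 3 = Y 0 3 ∧ (H * Y * G) 1 2 = Y 1 2 := by
  have eg : ∀ i j : Fin 4, (G * PP4) i j = PP4 i j := fun i j => congrFun (congrFun hGP i) j
  have epg : ∀ i j : Fin 4, (PP4 * G) i j = PP4 i j := fun i j => congrFun (congrFun hPG i) j
  have egj : ∀ i j : Fin 4, (G * JJ4) i j = (JJ4 * G) i j := fun i j => congrFun (congrFun hGJ i) j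
  have eh : ∀ i j : Fin 4, (H * PP4) i j = PP4 i j := fun i j => congrFun (congrFun hHP i) j
  have ehj : ∀ i j : Fin 4, (H * JJ4) i j = (JJ4 * H) i j := fun i j => congrFun (congrFun hHJ i) j
  have ehg : ∀ i j : Fin 4, (H * G) i j = (1 : Matrix (Fin 4) (Fin 4) ℝ) i j :=
    fun i j => congrFun (congrFun hHG i) j
  simp only [Matrix.mul_apply, Fin.sum_univ_four, JJ4, PP4, Matrix.one_apply] at eg epg egj eh ehj ehg
  have g00 := eg 0 3; have g13 := egj 2 3; have g23 := egj 1 3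
  have g3r2 := epg 0 2; have g3r3 := epg 0 3
  have g01 := egj 0 2; have g02 := egj 0 1
  have g21 := egj 1 1; have g22 := egj 1 2
  have h00 := eh 0 3; have h10 := eh 1 3
  have h01 := ehj 0 2; have h02 := ehj 0 1; have h13 := ehj 2 3
  have e11 := ehg 1 1
  simp at g00 g13 g23 g3r2 g3r3 g01 g02 g21 g22 h00 h10 h01 h02 h13 e11
  constructor
  · simp only [Matrix.mul_apply, Fin.sum_univ_four]
    rw [h00, h01, h02, g13, ← g23, g3r3, hY00, hY30, hY33]
    ring
  · simp only [Matrix.mul_apply, Fin.sum_univ_four]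
    rw [h10, h13, g02, g3r2, ← g22, hY11, hY22, hY21]
    rw [h10, h13, ← g21] at e11
    linear_combination Y 1 2 * e11

/-- Section 5.2: under the gauge transformation w ↦ w·(e^{−ΦJ₀}, TP₀)
the centre-of-mass symplectic potential ⟨μJ₀ + sP₀, w⁻¹δw⟩ changes by μδT − sδΦ. -/
theorem statement17 (μ s : ℝ) (w : ℝ → Matrix (Fin 4) (Fin 4) ℝ)
    (Φ T : ℝ → ℝ)
    (hw : Differentiable ℝ w) (hwISO : ∀ ε, IsISO (w ε))
    (hΦ : Differentiable ℝ Φ) (hT : Differentiable ℝ T)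
    (wt : ℝ → Matrix (Fin 4) (Fin 4) ℝ)
    (hwt : ∀ ε, wt ε = w ε * NormedSpace.exp (-(Φ ε) • Jhat 0 + T ε • Phat 0))
    (ε : ℝ) :
    pairIso (μ • Jhat 0 + s • Phat 0) ((wt ε)⁻¹ * deriv wt ε)
    = pairIso (μ • Jhat 0 + s • Phat 0) ((w ε)⁻¹ * deriv w ε)
      + μ * deriv T ε - s * deriv Φ ε := by
  rw [Jhat0_eq, Phat0_eq]
  simp only [Jhat0_eq, Phat0_eq] at hwt
  set p := deriv Φ ε with hpdef
  set q := deriv T ε with hqdef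
  set D := deriv w ε with hDdef
  have hwd : HasDerivAt w D ε := (hw ε).hasDerivAt
  have hΦd : HasDerivAt Φ p ε := (hΦ ε).hasDerivAt
  have hTd : HasDerivAt T q ε := (hT ε).hasDerivAt
  set A : Matrix (Fin 4) (Fin 4) ℝ := -(Φ ε) • JJ4 + T ε • PP4 with hAdef
  set G := NormedSpace.exp A with hGdef
  set Gi := NormedSpace.exp (-A) with hGidef
  -- algebraic facts about A
  have hAP : A * PP4 = 0 := by
    rw [hAdef]; simp [add_mul, smul_mul_assoc, JP4_zero, PP4_zero]
  have hPA : PP4 * A = 0 := by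
    rw [hAdef]; simp [mul_add, mul_smul_comm, PJ4_zero, PP4_zero]
  have hAJ : A * JJ4 = JJ4 * A := by
    rw [hAdef]
    simp [add_mul, mul_add, smul_mul_assoc, mul_smul_comm, JP4_zero, PJ4_zero]
  -- structural facts about G and Gi
  have hGP : G * PP4 = PP4 := aux_annih_left _ _ hAP
  have hPG : PP4 * G = PP4 := aux_annih_right _ _ hPA
  have hGJ : G * JJ4 = JJ4 * G := aux_comm _ _ hAJ
  have hGiP : Gi * PP4 = PP4 := aux_annih_left _ _ (by rw [neg_mul, hAP, neg_zero])
  have hPGi : PP4 * Gi = PP4 := aux_annih_right _ _ (by rw [mul_neg, hPA, neg_zero])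
  have hGiJ : Gi * JJ4 = JJ4 * Gi :=
    aux_comm _ _ (by rw [neg_mul, mul_neg, hAJ])
  have hGGi : G * Gi = 1 := by
    rw [hGdef, hGidef, ← Matrix.exp_add_of_commute A (-A) ((Commute.refl A).neg_right),
      add_neg_cancel, NormedSpace.exp_zero]
  have hGiG : Gi * G = 1 := by
    rw [hGdef, hGidef, ← Matrix.exp_add_of_commute (-A) A ((Commute.refl A).neg_left),
      neg_add_cancel, NormedSpace.exp_zero]
  -- derivative of wt
  have hwteq : wt = fun t => w t * NormedSpace.exp (-(Φ t) • JJ4 + T t • PP4) := funext hwt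
  have hslope := aux_deriv_slope w D Φ T p q ε (hasDerivAt_iff_tendsto_slope.mp hwd) hΦd hTd
  have hwtd : HasDerivAt wt (D * G + w ε * (G * (-p • JJ4 + q • PP4))) ε := by
    rw [hwteq]
    exact hasDerivAt_iff_tendsto_slope.mpr hslope
  have hder : deriv wt ε = D * G + w ε * (G * (-p • JJ4 + q • PP4)) := hwtd.deriv
  -- inverse of w ε
  obtain ⟨v, x, ⟨hv, hdet, hpos⟩, hwε⟩ := hwISO ε
  have huv : (η3 * vᵀ * η3) * v = 1 := by
    rw [Matrix.mul_assoc, Matrix.mul_assoc, ← Matrix.mul_assoc vᵀ η3 v, hv, eta_sq]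
  have hvu : v * (η3 * vᵀ * η3) = 1 := mul_eq_one_comm.mp huv
  set wi := pmat (η3 * vᵀ * η3) (-((η3 * vᵀ * η3) *ᵥ x)) with hwidef
  have hwwi : w ε * wi = 1 := by
    rw [hwε, hwidef, pmat_mul, hvu]
    have hx : v *ᵥ -((η3 * vᵀ * η3) *ᵥ x) + x = 0 := by
      rw [Matrix.mulVec_neg, Matrix.mulVec_mulVec, hvu, Matrix.one_mulVec]
      simp
    rw [hx, pmat_one]
  have hwiw : wi * w ε = 1 := mul_eq_one_comm.mp hwwi
  have hinvw : (w ε)⁻¹ = wi := Matrix.inv_eq_right_inv hwwi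
  have hinvwt : (wt ε)⁻¹ = Gi * wi := by
    apply Matrix.inv_eq_right_inv
    rw [hwt ε, ← hAdef, ← hGdef, Matrix.mul_assoc (w ε) G (Gi * wi),
      ← Matrix.mul_assoc G Gi wi, hGGi, Matrix.one_mul, hwwi]
  -- entrywise derivatives
  have hent : ∀ i j : Fin 4, HasDerivAt (fun t => w t i j) (D i j) ε := fun i j =>
    hasDerivAt_pi.mp (hasDerivAt_pi.mp hwd i) j
  have hD3 : ∀ j : Fin 4, D 3 j = 0 := by
    intro j
    have hconst : (fun t => w t 3 j) = fun _ : ℝ => (if (j : ℕ) < 3 then (0:ℝ) else 1) := by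
      funext t
      obtain ⟨v', x', _, hw'⟩ := hwISO t
      rw [hw', pmat_row3]
    have h2 := hasDerivAt_const ε (if (j : ℕ) < 3 then (0:ℝ) else 1)
    rw [← hconst] at h2
    exact (hent 3 j).unique h2
  have hwent : ∀ k l : Fin 3, w ε (E3 k) (E3 l) = v k l := fun k l => by
    rw [hwε, pmat_entry]
  have horth : ∀ (t : ℝ) (i j : Fin 3),
      w t (E3 0) (E3 i) * w t (E3 0) (E3 j) - w t (E3 1) (E3 i) * w t (E3 1) (E3 j)
        - w t (E3 2) (E3 i) * w t (E3 2) (E3 j) = η3 i j := by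
    intro t i j
    obtain ⟨v', x', ⟨hv', _, _⟩, hw'⟩ := hwISO t
    rw [hw', pmat_entry, pmat_entry, pmat_entry, pmat_entry, pmat_entry, pmat_entry]
    exact orth_entry v' hv' i j
  have hqd : ∀ i j : Fin 3,
      D (E3 0) (E3 i) * v 0 j + v 0 i * D (E3 0) (E3 j)
      - (D (E3 1) (E3 i) * v 1 j + v 1 i * D (E3 1) (E3 j))
      - (D (E3 2) (E3 i) * v 2 j + v 2 i * D (E3 2) (E3 j)) = 0 := by
    intro i j
    have h1 : HasDerivAt (fun t => w t (E3 0) (E3 i) * w t (E3 0) (E3 j)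
        - w t (E3 1) (E3 i) * w t (E3 1) (E3 j) - w t (E3 2) (E3 i) * w t (E3 2) (E3 j))
        (D (E3 0) (E3 i) * w ε (E3 0) (E3 j) + w ε (E3 0) (E3 i) * D (E3 0) (E3 j)
        - (D (E3 1) (E3 i) * w ε (E3 1) (E3 j) + w ε (E3 1) (E3 i) * D (E3 1) (E3 j))
        - (D (E3 2) (E3 i) * w ε (E3 2) (E3 j) + w ε (E3 2) (E3 i) * D (E3 2) (E3 j))) ε :=
      (((hent _ _).mul (hent _ _)).sub ((hent _ _).mul (hent _ _))).sub
        ((hent _ _).mul (hent _ _))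
    have h2 := hasDerivAt_const ε (η3 i j)
    have hfn : (fun _ : ℝ => η3 i j) = (fun t => w t (E3 0) (E3 i) * w t (E3 0) (E3 j)
        - w t (E3 1) (E3 i) * w t (E3 1) (E3 j) - w t (E3 2) (E3 i) * w t (E3 2) (E3 j)) :=
      funext fun t => (horth t i j).symm
    rw [hfn] at h2
    have h3 := h1.unique h2
    simp only [hwent] at h3
    linarith [h3]
  -- Y and its entries
  set Y := wi * D with hYdef
  have hYij : ∀ i j : Fin 3, Y (E3 i) (E3 j)
      = η3 i i * v 0 i * η3 0 0 * D (E3 0) (E3 j) + η3 i i * v 1 i * η3 1 1 * D (E3 1) (E3 j)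
        + η3 i i * v 2 i * η3 2 2 * D (E3 2) (E3 j) := by
    intro i j
    have : Y (E3 i) (E3 j) = ∑ k : Fin 4, wi (E3 i) k * D k (E3 j) := by
      rw [hYdef]; rfl
    rw [this, Fin.sum_univ_four,
      show (0 : Fin 4) = E3 0 from rfl, show (1 : Fin 4) = E3 1 from rfl,
      show (2 : Fin 4) = E3 2 from rfl, hwidef, pmat_entry, pmat_entry, pmat_entry,
      u_entry, u_entry, u_entry, hD3, mul_zero, add_zero]
  have hY30 : Y 3 0 = 0 := by
    have : Y 3 0 = ∑ k : Fin 4, wi 3 k * D k 0 := by rw [hYdef]; rfl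
    rw [this, Fin.sum_univ_four, hwidef, pmat_row3, pmat_row3, pmat_row3, pmat_row3]
    norm_num [show ((0:Fin 4):ℕ) = 0 from rfl, show ((1:Fin 4):ℕ) = 1 from rfl,
      show ((2:Fin 4):ℕ) = 2 from rfl, show ((3:Fin 4):ℕ) = 3 from rfl, hD3 0]
  have hY33 : Y 3 3 = 0 := by
    have : Y 3 3 = ∑ k : Fin 4, wi 3 k * D k 3 := by rw [hYdef]; rfl
    rw [this, Fin.sum_univ_four, hwidef, pmat_row3, pmat_row3, pmat_row3, pmat_row3]
    norm_num [show ((0:Fin 4):ℕ) = 0 from rfl, show ((1:Fin 4):ℕ) = 1 from rfl,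
      show ((2:Fin 4):ℕ) = 2 from rfl, show ((3:Fin 4):ℕ) = 3 from rfl, hD3 3]
  have hη : η3 0 0 = 1 ∧ η3 1 1 = -1 ∧ η3 2 2 = -1 := by
    simp [η3, Matrix.diagonal_apply, Matrix.vecHead, Matrix.vecTail]
  obtain ⟨hη0, hη1, hη2⟩ := hη
  have hY00 : Y 0 0 = 0 := by
    have hy := hYij 0 0
    rw [hη0, hη1, hη2] at hy
    have h := hqd 0 0
    show Y (E3 0) (E3 0) = 0
    linear_combination hy + (1/2) * h
  have hY11 : Y 1 1 = 0 := by
    have hy := hYij 1 1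
    rw [hη0, hη1, hη2] at hy
    have h := hqd 1 1
    show Y (E3 1) (E3 1) = 0
    linear_combination hy - (1/2) * h
  have hY22 : Y 2 2 = 0 := by
    have hy := hYij 2 2
    rw [hη0, hη1, hη2] at hy
    have h := hqd 2 2
    show Y (E3 2) (E3 2) = 0
    linear_combination hy - (1/2) * h
  have hY21 : Y 2 1 = -(Y 1 2) := by
    have hy1 := hYij 2 1
    have hy2 := hYij 1 2
    rw [hη0, hη1, hη2] at hy1 hy2
    have h := hqd 1 2
    show Y (E3 2) (E3 1) = -(Y (E3 1) (E3 2))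
    linear_combination hy1 + hy2 - h
  -- conjugation invariance
  have hconj := conj_entries G Gi Y hGP hPG hGJ hGiP hPGi hGiJ hGiG
    hY00 hY11 hY22 hY21 hY30 hY33
  -- assemble
  rw [hinvwt, hder, hinvw]
  have hZ : (Gi * wi) * (D * G + w ε * (G * (-p • JJ4 + q • PP4)))
      = Gi * Y * G + (-p • JJ4 + q • PP4) := by
    rw [mul_add]
    congr 1
    · rw [← Matrix.mul_assoc, Matrix.mul_assoc Gi wi D, ← hYdef]
    · rw [Matrix.mul_assoc Gi wi _, ← Matrix.mul_assoc wi (w ε) _, hwiw, Matrix.one_mul,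
        ← Matrix.mul_assoc, hGiG, Matrix.one_mul]
  rw [hZ, ← hYdef, pairIso_eval, pairIso_eval]
  simp only [Matrix.add_apply]
  rw [hconj.1, hconj.2]
  simp [JJ4, PP4, Matrix.smul_apply, Matrix.vecHead, Matrix.vecTail]
  ring
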